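/- For each face F of the reduced no broken circuit complex, the set of faces G of the extended no broken circuit complex whose intersection with {y_1,...,y_n} is exactly {y_i : i ∈ F} forms the Boolean interval [{y_i : i ∈ F}, F̄]; consequently these intervals partition the faces of Δ^ENBC_{M,≺}. -/

import Mathlib

open Set

/-- A circuit of a matroid: a minimal dependent set. -/
def Matroid.IsCircuit' {α : Type*} (M : Matroid α) (C : Set α) : Prop :=
  M.Dep C ∧ ∀ D ⊂ C, M.Indep D

/-- A broken circuit: a circuit with its least element (in the natural order) removed. -/
def Matroid.IsBrokenCircuit {n : ℕ} (M : Matroid (Fin (n + 1))) (B : Set (Fin (n + 1))) : Prop :=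
  ∃ C m, M.IsCircuit' C ∧ m ∈ C ∧ (∀ k ∈ C, m ≤ k) ∧ B = C \ {m}

/-- The rank of a set in a matroid: the largest size of an independent subset. -/
noncomputable def Matroid.rk' {α : Type*} (M : Matroid α) (S : Set α) : ℕ :=
  sSup {k | ∃ I, I ⊆ S ∧ M.Indep I ∧ I.ncard = k}

/-- A face of the reduced no broken circuit complex: a subset of `{1,…,n}` containing
no broken circuit (such a set is automatically independent). -/
def RNBCface {n : ℕ} (M : Matroid (Fin (n + 1))) (F : Set (Fin (n + 1))) : Prop :=
  (0 : Fin (n + 1)) ∉ F ∧ (∀ B, M.IsBrokenCircuit B → ¬ B ⊆ F) ∧ M.Indep F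

/-- The up-set `i↑` of `i` with respect to a second linear order `≺` (including `i` itself). -/
def upSet {n : ℕ} (prec : LinearOrder (Fin (n + 1))) (i : Fin (n + 1)) : Set (Fin (n + 1)) :=
  {j | prec.le i j}

/-- `L(F)`: the candidate `≺`-lexicographically maximal basis containing `F`, defined by
`i ∈ L(F)` iff `i ∈ F` or `rk(i↑ ∪ F) > rk((i↑ \ {i}) ∪ F)`. -/
noncomputable def LSet {n : ℕ} (M : Matroid (Fin (n + 1))) (prec : LinearOrder (Fin (n + 1)))
    (F : Set (Fin (n + 1))) : Set (Fin (n + 1)) :=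
  {i | i ∈ F ∨ M.rk' (upSet prec i ∪ F) > M.rk' ((upSet prec i \ {i}) ∪ F)}

/-- The facet `F̄` of the extended no broken circuit complex attached to a face `F` of the
reduced no broken circuit complex:  `{y_i : i ∈ F} ∪ {x_j : j ∈ L(F) \ F} ∪ {y_0}`,
with `x`-vertices encoded by `Sum.inl` and `y`-vertices by `Sum.inr`. -/
noncomputable def barFace {n : ℕ} (M : Matroid (Fin (n + 1))) (prec : LinearOrder (Fin (n + 1)))
    (F : Set (Fin (n + 1))) : Set (Fin (n + 1) ⊕ Fin (n + 1)) :=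
  (Sum.inr '' F) ∪ (Sum.inl '' (LSet M prec F \ F)) ∪ {Sum.inr 0}

/-- A face of the extended no broken circuit complex `Δ^ENBC_{M,≺}`: a subset of some
facet `F̄`. -/
noncomputable def ENBCface {n : ℕ} (M : Matroid (Fin (n + 1))) (prec : LinearOrder (Fin (n + 1)))
    (G : Set (Fin (n + 1) ⊕ Fin (n + 1))) : Prop :=
  ∃ F, RNBCface M F ∧ G ⊆ barFace M prec F

variable {n : ℕ}

lemma rk'_bdd (M : Matroid (Fin (n+1))) (S : Set (Fin (n+1))) :
    BddAbove {k | ∃ I, I ⊆ S ∧ M.Indep I ∧ I.ncard = k} :=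
  ⟨n+1, by
    rintro k ⟨I, -, -, rfl⟩
    have := Set.ncard_le_ncard (Set.subset_univ I) Set.finite_univ
    simpa [Set.ncard_univ] using this⟩

lemma rk'_spec (M : Matroid (Fin (n+1))) (S : Set (Fin (n+1))) :
    ∃ I, I ⊆ S ∧ M.Indep I ∧ I.ncard = M.rk' S := by
  have hne : ({k | ∃ I, I ⊆ S ∧ M.Indep I ∧ I.ncard = k}).Nonempty :=
    ⟨0, ∅, empty_subset _, M.empty_indep, by simp⟩
  exact Nat.sSup_mem hne (rk'_bdd M S)

lemma le_rk' {M : Matroid (Fin (n+1))} {S I : Set (Fin (n+1))} (hIS : I ⊆ S) (hI : M.Indep I) :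
    I.ncard ≤ M.rk' S := le_csSup (rk'_bdd M S) ⟨I, hIS, hI, rfl⟩

lemma basis_ncard {M : Matroid (Fin (n+1))} {J X : Set (Fin (n+1))} (hJ : M.IsBasis J X) :
    M.rk' X = J.ncard := by
  refine le_antisymm ?_ (le_rk' hJ.subset hJ.indep)
  obtain ⟨I, hIX, hI, hcard⟩ := rk'_spec M X
  obtain ⟨J', hJ', hIJ'⟩ := hI.subset_isBasis_of_subset hIX hJ.subset_ground
  have h1 : I.ncard ≤ J'.ncard := Set.ncard_le_ncard hIJ' J'.toFinite
  have h2 : J'.ncard = J.ncard := by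
    rw [Set.ncard_def, Set.ncard_def, hJ'.encard_eq_encard hJ]
  omega

lemma rk'_insert_lt_iff {M : Matroid (Fin (n+1))} (hE : M.E = Set.univ)
    {X : Set (Fin (n+1))} {i : Fin (n+1)} (hiX : i ∉ X) :
    M.rk' X < M.rk' (insert i X) ↔ i ∉ M.closure X := by
  have hXE : X ⊆ M.E := by rw [hE]; exact subset_univ X
  obtain ⟨J, hJ⟩ := M.exists_isBasis X
  have hJX := hJ.subset
  constructor
  · intro hlt hicl
    obtain ⟨I, hIX, hI, hcard⟩ := rk'_spec M (insert i X)
    by_cases hiI : i ∈ I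
    · set I' := I \ {i} with hI'def
      have hI'X : I' ⊆ X := by
        rintro x ⟨hxI, hxi⟩
        rcases hIX hxI with h | h
        · exact absurd h hxi
        · exact h
      have hI'indep : M.Indep I' := hI.subset diff_subset
      have hins : insert i I' = I := by
        rw [hI'def, insert_diff_singleton, insert_eq_of_mem hiI]
      have hinotcl : i ∉ M.closure I' := by
        have : M.Indep (insert i I') := hins ▸ hI
        exact ((hI'indep.insert_indep_iff_of_notMem (fun h => h.2 rfl)).mp this).2
      obtain ⟨J', hJ', hI'J'⟩ := hI'indep.subset_isBasis_of_subset hI'X hXE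
      have hne : I' ≠ J' := by
        rintro rfl
        exact hinotcl (hJ'.closure_eq_closure ▸ hicl)
      have hlt2 : I'.ncard < J'.ncard :=
        Set.ncard_lt_ncard (ssubset_of_subset_of_ne hI'J' hne) J'.toFinite
      have hIcard : I'.ncard + 1 = I.ncard := Set.ncard_diff_singleton_add_one hiI I.toFinite
      have hJ'rk : M.rk' X = J'.ncard := basis_ncard hJ'
      omega
    · have hIX' : I ⊆ X := fun x hx => (hIX hx).resolve_left (by rintro rfl; exact hiI hx)
      have := le_rk' hIX' hI
      omega
  · intro hicl
    have hiJ : i ∉ J := fun h => hiX (hJX h)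
    have hiclJ : i ∉ M.closure J := hJ.closure_eq_closure ▸ hicl
    have hins : M.Indep (insert i J) :=
      (hJ.indep.insert_indep_iff_of_notMem hiJ).mpr ⟨by rw [hE]; trivial, hiclJ⟩
    have hle := le_rk' (insert_subset_insert hJX) hins
    rw [Set.ncard_insert_of_notMem hiJ J.toFinite] at hle
    have := basis_ncard hJ
    omega

lemma rk'_insert_lt_mono {M : Matroid (Fin (n+1))} (hE : M.E = Set.univ)
    {X Y : Set (Fin (n+1))} {i : Fin (n+1)} (hXY : X ⊆ Y) (hiY : i ∉ Y)
    (h : M.rk' Y < M.rk' (insert i Y)) : M.rk' X < M.rk' (insert i X) := by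
  rw [rk'_insert_lt_iff hE (fun h' => hiY (hXY h'))]
  rw [rk'_insert_lt_iff hE hiY] at h
  exact fun hc => h (M.closure_subset_closure hXY hc)

lemma LSet_mono {n : ℕ} {M : Matroid (Fin (n + 1))} (prec : LinearOrder (Fin (n + 1)))
    (hE : M.E = Set.univ) {F F' : Set (Fin (n + 1))} {i : Fin (n + 1)}
    (hFF' : F ⊆ F') (hi : i ∈ LSet M prec F') (hiF' : i ∉ F') : i ∈ LSet M prec F := by
  rcases hi with hi | hi
  · exact absurd hi hiF'
  have hiF : i ∉ F := fun h => hiF' (hFF' h)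
  have hset : ∀ (A : Set (Fin (n + 1))), i ∉ A →
      upSet prec i ∪ A = insert i ((upSet prec i \ {i}) ∪ A) := by
    intro A hiA
    ext x
    simp only [upSet, mem_union, mem_insert_iff, mem_diff, mem_singleton_iff, mem_setOf_eq]
    constructor
    · rintro (hx | hx)
      · by_cases hxi : x = i
        · exact Or.inl hxi
        · exact Or.inr (Or.inl ⟨hx, hxi⟩)
      · exact Or.inr (Or.inr hx)
    · rintro (rfl | ⟨hx, -⟩ | hx)
      · exact Or.inl (prec.le_refl _)
      · exact Or.inl hx
      · exact Or.inr hx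
  rw [hset F' hiF'] at hi
  have hXY : (upSet prec i \ {i}) ∪ F ⊆ (upSet prec i \ {i}) ∪ F' :=
    union_subset_union_right _ hFF'
  have hiY : i ∉ (upSet prec i \ {i}) ∪ F' := by
    rintro (⟨-, h⟩ | h)
    · exact h rfl
    · exact hiF' h
  have := rk'_insert_lt_mono hE hXY hiY hi
  right
  rw [hset F hiF]
  exact this

lemma inr_mem_barFace {n : ℕ} {M : Matroid (Fin (n + 1))} {prec : LinearOrder (Fin (n + 1))}
    {F : Set (Fin (n + 1))} {b : Fin (n + 1)} (hb : b ≠ 0)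
    (h : Sum.inr b ∈ barFace M prec F) : b ∈ F := by
  rcases h with (h | h) | h
  · obtain ⟨c, hc, hceq⟩ := h
    obtain rfl : c = b := Sum.inr.inj hceq
    exact hc
  · obtain ⟨j, -, hjeq⟩ := h
    simp at hjeq
  · exact absurd (Sum.inr.inj h) hb

/-- for each face `F` of the reduced no broken circuit complex, the faces `G`
of the extended complex whose set of `y`-vertices other than `y_0` is exactly
`{y_i : i ∈ F}` form the Boolean interval `[{y_i : i ∈ F}, F̄]`; consequently these
intervals partition the faces of `Δ^ENBC_{M,≺}`. -/
theorem ENBC_interval_partition {n r : ℕ} (M : Matroid (Fin (n + 1)))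
    (prec : LinearOrder (Fin (n + 1)))
    (hE : M.E = Set.univ)
    (hsimple : ∀ e f : Fin (n + 1), e ≠ f → M.Indep {e, f})
    (hloopless : ∀ e : Fin (n + 1), M.Indep {e})
    (hrank : ∀ B : Set (Fin (n + 1)), M.IsBase B → B.ncard = r + 1) :
    (∀ F, RNBCface M F → ∀ G : Set (Fin (n + 1) ⊕ Fin (n + 1)),
      (ENBCface M prec G ∧
        G ∩ {v | ∃ b : Fin (n + 1), b ≠ 0 ∧ v = Sum.inr b} = Sum.inr '' F)
        ↔ (Sum.inr '' F ⊆ G ∧ G ⊆ barFace M prec F)) ∧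
    (∀ G : Set (Fin (n + 1) ⊕ Fin (n + 1)), ENBCface M prec G →
      ∃! F, RNBCface M F ∧ Sum.inr '' F ⊆ G ∧ G ⊆ barFace M prec F) := by
  have key : ∀ F, RNBCface M F → ∀ G : Set (Fin (n + 1) ⊕ Fin (n + 1)),
      (ENBCface M prec G ∧
        G ∩ {v | ∃ b : Fin (n + 1), b ≠ 0 ∧ v = Sum.inr b} = Sum.inr '' F)
        ↔ (Sum.inr '' F ⊆ G ∧ G ⊆ barFace M prec F) := by
    intro F hF G
    constructor
    · rintro ⟨⟨F', hF', hGF'⟩, hy⟩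
      have hsub : Sum.inr '' F ⊆ G := hy ▸ inter_subset_left
      have hFF' : F ⊆ F' := by
        intro b hb
        have hb0 : b ≠ 0 := fun h => hF.1 (h ▸ hb)
        exact inr_mem_barFace hb0 (hGF' (hsub ⟨b, hb, rfl⟩))
      refine ⟨hsub, ?_⟩
      intro v hv
      rcases hGF' hv with (h | h) | h
      · obtain ⟨b, hb, rfl⟩ := h
        by_cases hb0 : b = 0
        · subst hb0
          exact Set.mem_union_right _ rfl
        · have : Sum.inr b ∈ (Sum.inr '' F : Set (Fin (n + 1) ⊕ Fin (n + 1))) := by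
            rw [← hy]; exact ⟨hv, b, hb0, rfl⟩
          exact Set.mem_union_left _ (Set.mem_union_left _ this)
      · obtain ⟨j, hj, rfl⟩ := h
        have hjF : j ∈ LSet M prec F := LSet_mono prec hE hFF' hj.1 hj.2
        have hjnF : j ∉ F := fun hh => hj.2 (hFF' hh)
        exact Set.mem_union_left _ (Set.mem_union_right _ ⟨j, ⟨hjF, hjnF⟩, rfl⟩)
      · exact Set.mem_union_right _ h
    · rintro ⟨hsub, hsup⟩
      refine ⟨⟨F, hF, hsup⟩, ?_⟩
      ext v
      constructor
      · rintro ⟨hvG, b, hb0, rfl⟩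
        exact ⟨b, inr_mem_barFace hb0 (hsup hvG), rfl⟩
      · rintro ⟨b, hb, rfl⟩
        exact ⟨hsub ⟨b, hb, rfl⟩, b, fun h => hF.1 (h ▸ hb), rfl⟩
  refine ⟨key, ?_⟩
  intro G hG
  obtain ⟨F', hF', hGF'⟩ := hG
  set F : Set (Fin (n + 1)) := {b | b ≠ 0 ∧ Sum.inr b ∈ G} with hFdef
  have hFF' : F ⊆ F' := fun b hb => inr_mem_barFace hb.1 (hGF' hb.2)
  have hFr : RNBCface M F :=
    ⟨fun h => h.1 rfl, fun B hB hBF => hF'.2.1 B hB (hBF.trans hFF'), hF'.2.2.subset hFF'⟩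
  have hy : G ∩ {v | ∃ b : Fin (n + 1), b ≠ 0 ∧ v = Sum.inr b} = Sum.inr '' F := by
    ext v
    constructor
    · rintro ⟨hvG, b, hb0, rfl⟩
      exact ⟨b, ⟨hb0, hvG⟩, rfl⟩
    · rintro ⟨b, ⟨hb0, hbG⟩, rfl⟩
      exact ⟨hbG, b, hb0, rfl⟩
  have hmain := (key F hFr G).mp ⟨⟨F', hF', hGF'⟩, hy⟩
  refine ⟨F, ⟨hFr, hmain.1, hmain.2⟩, ?_⟩
  rintro F₁ ⟨hF₁, hsub₁, hsup₁⟩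
  ext b
  constructor
  · intro hb
    exact ⟨fun h => hF₁.1 (h ▸ hb), hsub₁ ⟨b, hb, rfl⟩⟩
  · rintro ⟨hb0, hbG⟩
    exact inr_mem_barFace hb0 (hsup₁ hbG)
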